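/- Let z₀ ∈ 𝔸_r with 0 < r < 1. The function p(z) = z ϑ₁'(conj(z₀) z)/ϑ₁(conj(z₀) z) − ϑ₁'(z₀/z)/(z ϑ₁(z₀/z)) is holomorphic on 𝔸_r \ {z₀} and has a simple pole at z₀ with residue 1. -/

import Mathlib

open Set Complex Filter

/-- The constant `C = ∏_{k=1}^∞ (1 − r^{2k})`. -/
noncomputable def thetaConst (r : ℝ) : ℂ := ∏' k : ℕ, (1 - (r : ℂ) ^ (2 * (k + 1)))

/-- The annular Jacobi theta function
`ϑ₁(z) = C (1 − 1/z) ∏_{k=1}^∞ (1 − r^{2k} z)(1 − r^{2k}/z)`. -/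
noncomputable def theta1 (r : ℝ) (z : ℂ) : ℂ :=
  thetaConst r * (1 - 1 / z) *
    ∏' k : ℕ, ((1 - (r : ℂ) ^ (2 * (k + 1)) * z) * (1 - (r : ℂ) ^ (2 * (k + 1)) / z))

/-- `p(z) = z ϑ₁'(z̄₀ z)/ϑ₁(z̄₀ z) − ϑ₁'(z₀/z)/(z ϑ₁(z₀/z))`. -/
noncomputable def pfun (r : ℝ) (z₀ z : ℂ) : ℂ :=
  z * deriv (theta1 r) ((starRingEnd ℂ) z₀ * z) / theta1 r ((starRingEnd ℂ) z₀ * z)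
    - deriv (theta1 r) (z₀ / z) / (z * theta1 r (z₀ / z))

/- ### Auxiliary lemmas -/

lemma aux_log_norm {w : ℂ} (h : ‖w - 1‖ ≤ 1/2) : ‖Complex.log w‖ ≤ (3/2) * ‖w - 1‖ := by
  have h2 := Complex.norm_log_one_add_half_le_self (z := w - 1) h
  have h3 : (1 : ℂ) + (w - 1) = w := by ring
  rwa [h3] at h2

lemma aux_slit {w : ℂ} (h : ‖w - 1‖ ≤ 1/2) : w ∈ Complex.slitPlane := by
  rw [Complex.mem_slitPlane_iff]
  left
  have h1 : |(w - 1).re| ≤ ‖w - 1‖ := Complex.abs_re_le_norm _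
  simp only [Complex.sub_re, Complex.one_re] at h1
  have h2 := abs_le.mp (h1.trans h)
  linarith [h2.1]

lemma aux_isOpen (a b : ℝ) : IsOpen {z : ℂ | a < ‖z‖ ∧ ‖z‖ < b} := by
  have : {z : ℂ | a < ‖z‖ ∧ ‖z‖ < b} = (fun z : ℂ => ‖z‖) ⁻¹' Ioo a b := rfl
  rw [this]
  exact isOpen_Ioo.preimage continuous_norm

/-- Main generic lemma: an infinite product with factors uniformly close to 1 (in a
summable way) and nonvanishing, is differentiable and nonvanishing. -/
lemma aux_tprod_facts (F : ℕ → ℂ → ℂ) (S : Set ℂ) (hS : IsOpen S)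
    (hdiff : ∀ k, DifferentiableOn ℂ (F k) S)
    (hne : ∀ k, ∀ z ∈ S, F k z ≠ 0)
    (u : ℕ → ℝ) (hu : Summable u)
    (hb : ∀ k, ∀ z ∈ S, ‖F k z - 1‖ ≤ u k) :
    DifferentiableOn ℂ (fun z => ∏' k, F k z) S ∧ ∀ z ∈ S, (∏' k, F k z) ≠ 0 := by
  obtain ⟨N, hN⟩ : ∃ N, ∀ k, N ≤ k → u k ≤ 1/2 := by
    have h1 : ∀ᶠ k in atTop, u k ≤ 1/2 :=
      hu.tendsto_atTop_zero.eventually_le_const (by norm_num)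
    exact eventually_atTop.mp h1
  set u' : ℕ → ℝ := fun k => (3/2) * u (k + N) with hu'def
  have hu' : Summable u' := ((summable_nat_add_iff N).2 hu).mul_left _
  have hble : ∀ k z, z ∈ S → ‖F (k + N) z - 1‖ ≤ 1/2 :=
    fun k z hz => (hb (k + N) z hz).trans (hN _ (Nat.le_add_left N k))
  have hbound : ∀ (k : ℕ) (z : ℂ), z ∈ S → ‖Complex.log (F (k + N) z)‖ ≤ u' k := by
    intro k z hz
    refine (aux_log_norm (hble k z hz)).trans ?_
    have := hb (k + N) z hz
    rw [hu'def]
    dsimp only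
    nlinarith [this]
  have hlogdiff : ∀ k : ℕ, DifferentiableOn ℂ (fun z => Complex.log (F (k + N) z)) S := by
    intro k z hz
    exact (hdiff (k + N) z hz).clog (aux_slit (hble k z hz))
  set L : ℂ → ℂ := fun z => ∑' k, Complex.log (F (k + N) z) with hL
  have hLdiff : DifferentiableOn ℂ L S :=
    differentiableOn_tsum_of_summable_norm hu' hlogdiff hS (fun k w hw => hbound k w hw)
  have hsum : ∀ z ∈ S, Summable (fun k => Complex.log (F (k + N) z)) := by
    intro z hz
    exact Summable.of_norm_bounded hu' (fun k => hbound k z hz)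
  have hProd : ∀ z ∈ S,
      HasProd (fun k => F k z) ((∏ k ∈ Finset.range N, F k z) * Complex.exp (L z)) := by
    intro z hz
    have h1 : HasProd (fun k => F (k + N) z) (Complex.exp (L z)) := by
      have h2 := (hsum z hz).hasSum.cexp
      exact h2.congr_fun (fun k => (Complex.exp_log (hne (k + N) z hz)).symm)
    exact h1.prod_range_mul
  have heq : ∀ z ∈ S, (∏' k, F k z) = (∏ k ∈ Finset.range N, F k z) * Complex.exp (L z) :=
    fun z hz => (hProd z hz).tprod_eq
  constructor
  · refine DifferentiableOn.congr ?_ heq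
    exact (DifferentiableOn.fun_finset_prod (fun k _ => hdiff k)).mul hLdiff.cexp
  · intro z hz
    rw [heq z hz]
    exact mul_ne_zero (Finset.prod_ne_zero_iff.2 (fun k _ => hne k z hz)) (Complex.exp_ne_zero _)

lemma aux_summable_q {r : ℝ} (hr0 : 0 ≤ r) (hr1 : r < 1) :
    Summable (fun k : ℕ => r ^ (2 * (k + 1))) := by
  have h1 : Summable (fun k : ℕ => (r ^ 2) ^ k) :=
    summable_geometric_of_lt_one (by positivity) (by nlinarith)
  refine (h1.mul_left (r ^ 2)).congr (fun k => ?_)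
  rw [pow_mul, pow_succ]
  ring

lemma aux_q_norm {r : ℝ} (hr0 : 0 ≤ r) (k : ℕ) :
    ‖(r : ℂ) ^ (2 * (k + 1))‖ = r ^ (2 * (k + 1)) := by
  rw [norm_pow, Complex.norm_real, Real.norm_eq_abs, _root_.abs_of_nonneg hr0]

lemma aux_q_le {r : ℝ} (hr0 : 0 ≤ r) (hr1 : r < 1) (k : ℕ) :
    r ^ (2 * (k + 1)) ≤ r ^ 2 :=
  pow_le_pow_of_le_one hr0 hr1.le (by omega)

lemma thetaConst_ne_zero {r : ℝ} (hr0 : 0 ≤ r) (hr1 : r < 1) : thetaConst r ≠ 0 := by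
  have hq : ∀ k : ℕ, ‖(r : ℂ) ^ (2 * (k + 1))‖ < 1 := by
    intro k
    rw [aux_q_norm hr0]
    calc r ^ (2 * (k + 1)) ≤ r ^ 2 := aux_q_le hr0 hr1 k
    _ < 1 := by nlinarith
  have key := aux_tprod_facts (fun k _ => (1 - (r : ℂ) ^ (2 * (k + 1)))) univ isOpen_univ
    (fun k => differentiableOn_const _)
    (by
      intro k z _ h
      rw [sub_eq_zero] at h
      have := hq k
      rw [← h] at this
      simp at this)
    (fun k => r ^ (2 * (k + 1))) (aux_summable_q hr0 hr1)
    (by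
      intro k z _
      have : (1 : ℂ) - (r : ℂ) ^ (2 * (k + 1)) - 1 = -((r : ℂ) ^ (2 * (k + 1))) := by ring
      rw [this, norm_neg, aux_q_norm hr0])
  have h2 := key.2 0 (mem_univ 0)
  exact h2

/-- The infinite product part of `theta1`. -/
noncomputable def Pfun (r : ℝ) (z : ℂ) : ℂ :=
  ∏' k : ℕ, ((1 - (r : ℂ) ^ (2 * (k + 1)) * z) * (1 - (r : ℂ) ^ (2 * (k + 1)) / z))

/-- `theta1 r z = (z - 1) * Hfun r z`. -/
noncomputable def Hfun (r : ℝ) (z : ℂ) : ℂ := thetaConst r * Pfun r z / z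

lemma theta1_eq_Hfun (r : ℝ) {z : ℂ} (hz : z ≠ 0) : theta1 r z = (z - 1) * Hfun r z := by
  unfold theta1 Hfun Pfun
  field_simp

lemma Pfun_facts {r s : ℝ} (hr0 : 0 < r) (hr1 : r < 1) (hs0 : r ^ 2 < s) (hs1 : s < 1) :
    DifferentiableOn ℂ (Pfun r) {z : ℂ | s < ‖z‖ ∧ ‖z‖ < 1 / s} ∧
    ∀ z ∈ {z : ℂ | s < ‖z‖ ∧ ‖z‖ < 1 / s}, Pfun r z ≠ 0 := by
  have hs : 0 < s := lt_trans (by positivity) hs0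
  have hzne : ∀ z ∈ {z : ℂ | s < ‖z‖ ∧ ‖z‖ < 1 / s}, z ≠ 0 := by
    intro z hz h
    rw [h] at hz
    simp only [mem_setOf_eq, norm_zero] at hz
    linarith [hz.1]
  have hfac1 : ∀ (k : ℕ), ∀ z ∈ {z : ℂ | s < ‖z‖ ∧ ‖z‖ < 1 / s},
      ‖(r : ℂ) ^ (2 * (k + 1)) * z‖ < 1 := by
    intro k z hz
    rw [norm_mul, aux_q_norm hr0.le]
    have h1 : r ^ (2 * (k + 1)) ≤ r ^ 2 := aux_q_le hr0.le hr1 k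
    have h2 : ‖z‖ < 1 / s := hz.2
    have h3 : 0 ≤ ‖z‖ := norm_nonneg z
    calc r ^ (2 * (k + 1)) * ‖z‖ ≤ r ^ 2 * ‖z‖ := by nlinarith
    _ < r ^ 2 * (1 / s) := by
        apply mul_lt_mul_of_pos_left h2 (by positivity)
    _ < s * (1 / s) := by
        apply mul_lt_mul_of_pos_right hs0 (by positivity)
    _ = 1 := by field_simp
  have hfac2 : ∀ (k : ℕ), ∀ z ∈ {z : ℂ | s < ‖z‖ ∧ ‖z‖ < 1 / s},
      ‖(r : ℂ) ^ (2 * (k + 1)) / z‖ < 1 := by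
    intro k z hz
    rw [norm_div, aux_q_norm hr0.le]
    have h1 : r ^ (2 * (k + 1)) ≤ r ^ 2 := aux_q_le hr0.le hr1 k
    have h2 : s < ‖z‖ := hz.1
    rw [div_lt_one (lt_trans hs h2)]
    nlinarith
  refine aux_tprod_facts _ _ (aux_isOpen s (1 / s)) ?_ ?_ (fun k => 3 / s * r ^ (2 * (k + 1)))
    ((aux_summable_q hr0.le hr1).mul_left _) ?_
  · intro k
    exact (((differentiableOn_const _).sub ((differentiableOn_const _).mul
      differentiableOn_id)).mul
      ((differentiableOn_const _).sub ((differentiableOn_const _).div differentiableOn_id hzne)))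
  · intro k z hz
    apply mul_ne_zero
    · intro h
      rw [sub_eq_zero] at h
      have := hfac1 k z hz
      rw [← h] at this
      simp at this
    · intro h
      rw [sub_eq_zero] at h
      have := hfac2 k z hz
      rw [← h] at this
      simp at this
  · intro k z hz
    have hz0 : z ≠ 0 := hzne z hz
    set a : ℂ := (r : ℂ) ^ (2 * (k + 1)) with ha
    have hexp : (1 - a * z) * (1 - a / z) - 1 = a * (a - z - 1/z) := by
      field_simp
      ring
    rw [hexp, norm_mul]
    have hna : ‖a‖ = r ^ (2 * (k + 1)) := aux_q_norm hr0.le k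
    have h1 : ‖a - z - 1/z‖ ≤ ‖a‖ + ‖z‖ + ‖1/z‖ := by
      calc ‖a - z - 1/z‖ ≤ ‖a - z‖ + ‖1/z‖ := norm_sub_le _ _
      _ ≤ ‖a‖ + ‖z‖ + ‖1/z‖ := by linarith [norm_sub_le a z]
    have h2 : ‖a‖ ≤ 1 := by
      rw [hna]
      have := aux_q_le hr0.le hr1 k
      nlinarith
    have h3 : ‖z‖ < 1 / s := hz.2
    have h4 : ‖1/z‖ < 1 / s := by
      rw [norm_div, norm_one, div_lt_div_iff₀ (norm_pos_iff.mpr hz0) hs]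
      have := hz.1
      nlinarith [norm_pos_iff.mpr hz0]
    have h5 : (1 : ℝ) ≤ 1 / s := by
      rw [le_div_iff₀ hs]
      linarith
    have h6 : ‖a - z - 1/z‖ ≤ 3 / s := by
      have : ‖a‖ + ‖z‖ + ‖1/z‖ ≤ 3 / s := by
        have := norm_nonneg (1/z)
        calc ‖a‖ + ‖z‖ + ‖1/z‖ ≤ 1 + 1/s + 1/s := by linarith
        _ ≤ 1/s + 1/s + 1/s := by linarith
        _ = 3 / s := by ring
      linarith
    rw [hna]
    have hq0 : (0:ℝ) ≤ r ^ (2 * (k + 1)) := by positivity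
    calc r ^ (2 * (k + 1)) * ‖a - z - 1/z‖ ≤ r ^ (2 * (k + 1)) * (3 / s) := by nlinarith
    _ = 3 / s * r ^ (2 * (k + 1)) := by ring

theorem stmt15 (r : ℝ) (hr0 : 0 < r) (hr1 : r < 1)
    (z₀ : ℂ) (hz₀l : r < ‖z₀‖) (hz₀u : ‖z₀‖ < 1)
    -- `|z₀|²` is not of the form `r^{2m}`, so the first term is holomorphic on the annulus
    (hgen : ∀ m : ℤ, (‖z₀‖ ^ 2 : ℝ) ≠ r ^ (2 * m)) :
    DifferentiableOn ℂ (pfun r z₀) ({z : ℂ | r < ‖z‖ ∧ ‖z‖ < 1} \ {z₀}) ∧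
    ∃ ε > 0, ∃ g : ℂ → ℂ, DifferentiableOn ℂ g (Metric.ball z₀ ε) ∧
      ∀ z ∈ Metric.ball z₀ ε \ {z₀}, pfun r z₀ z = (z - z₀)⁻¹ + g z := by
  -- setup
  set s : ℝ := (r ^ 2 + r * ‖z₀‖) / 2 with hsdef
  have hrz : r ^ 2 < r * ‖z₀‖ := by nlinarith
  have hs0 : r ^ 2 < s := by rw [hsdef]; linarith
  have hsrz : s < r * ‖z₀‖ := by rw [hsdef]; linarith
  have hsr : s < r := by nlinarith [norm_nonneg z₀]
  have hs1 : s < 1 := lt_trans hsr hr1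
  have hspos : 0 < s := lt_trans (by positivity) hs0
  set A : Set ℂ := {z : ℂ | s < ‖z‖ ∧ ‖z‖ < 1 / s} with hAdef
  have hA : IsOpen A := aux_isOpen s (1 / s)
  obtain ⟨hPdiff, hPne⟩ := Pfun_facts hr0 hr1 hs0 hs1
  have hC : thetaConst r ≠ 0 := thetaConst_ne_zero hr0.le hr1
  have hAne : ∀ z ∈ A, z ≠ 0 := by
    intro z hz h
    rw [h] at hz
    simp only [hAdef, mem_setOf_eq, norm_zero] at hz
    linarith [hz.1]
  have hHdiff : DifferentiableOn ℂ (Hfun r) A := by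
    exact ((differentiableOn_const _).mul hPdiff).div differentiableOn_id hAne
  have hHne : ∀ z ∈ A, Hfun r z ≠ 0 := by
    intro z hz
    exact div_ne_zero (mul_ne_zero hC (hPne z hz)) (hAne z hz)
  have hθdiff : DifferentiableOn ℂ (theta1 r) A := by
    refine DifferentiableOn.congr ((differentiableOn_id.sub (differentiableOn_const 1)).mul
      hHdiff) (fun z hz => theta1_eq_Hfun r (hAne z hz))
  have hθne : ∀ w ∈ A, w ≠ 1 → theta1 r w ≠ 0 := by
    intro w hw hw1
    rw [theta1_eq_Hfun r (hAne w hw)]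
    exact mul_ne_zero (sub_ne_zero.2 hw1) (hHne w hw)
  have hθderiv : ∀ w ∈ A, deriv (theta1 r) w = Hfun r w + (w - 1) * deriv (Hfun r) w := by
    intro w hw
    have hev : theta1 r =ᶠ[nhds w] fun u => (u - 1) * Hfun r u := by
      filter_upwards [hA.mem_nhds hw] with u hu
      exact theta1_eq_Hfun r (hAne u hu)
    rw [hev.deriv_eq]
    rw [deriv_fun_mul (by simp [differentiableAt_id])
      ((hHdiff w hw).differentiableAt (hA.mem_nhds hw))]
    have : deriv (fun u : ℂ => u - 1) w = 1 := by
      rw [deriv_sub_const, deriv_id'']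
    rw [this]
    ring
  have hDθdiff : DifferentiableOn ℂ (deriv (theta1 r)) A :=
    ((hθdiff.analyticOnNhd hA).deriv).differentiableOn
  have hDHdiff : DifferentiableOn ℂ (deriv (Hfun r)) A :=
    ((hHdiff.analyticOnNhd hA).deriv).differentiableOn
  -- memberships
  have hnconj : ‖(starRingEnd ℂ) z₀‖ = ‖z₀‖ := RCLike.norm_conj z₀
  have hmem1 : ∀ z : ℂ, r < ‖z‖ → ‖z‖ < 1 → (starRingEnd ℂ) z₀ * z ∈ A := by
    intro z h1 h2
    have hn : ‖(starRingEnd ℂ) z₀ * z‖ = ‖z₀‖ * ‖z‖ := by rw [norm_mul, hnconj]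
    constructor
    · rw [hn]
      calc s < r * ‖z₀‖ := hsrz
      _ < ‖z₀‖ * ‖z‖ := by nlinarith [norm_nonneg z₀]
    · rw [hn]
      have hlt1 : ‖z₀‖ * ‖z‖ < 1 := by nlinarith [norm_nonneg z₀, norm_nonneg z]
      calc ‖z₀‖ * ‖z‖ < 1 := hlt1
      _ ≤ 1 / s := by rw [le_div_iff₀ hspos]; linarith
  have hmem1ne : ∀ z : ℂ, r < ‖z‖ → ‖z‖ < 1 → (starRingEnd ℂ) z₀ * z ≠ 1 := by
    intro z h1 h2 h
    have hn : ‖(starRingEnd ℂ) z₀ * z‖ = ‖z₀‖ * ‖z‖ := by rw [norm_mul, hnconj]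
    rw [h] at hn
    simp only [norm_one] at hn
    nlinarith [norm_nonneg z₀, norm_nonneg z]
  have hmem2 : ∀ z : ℂ, r < ‖z‖ → ‖z‖ < 1 → z₀ / z ∈ A := by
    intro z h1 h2
    have hz0 : (0:ℝ) < ‖z‖ := lt_trans hr0 h1
    have hn : ‖z₀ / z‖ = ‖z₀‖ / ‖z‖ := norm_div z₀ z
    constructor
    · rw [hn, lt_div_iff₀ hz0]
      calc s * ‖z‖ < s * 1 := by nlinarith
      _ = s := mul_one s
      _ < r * ‖z₀‖ := hsrz
      _ ≤ ‖z₀‖ := by nlinarith [norm_nonneg z₀]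
    · rw [hn, div_lt_div_iff₀ hz0 hspos]
      nlinarith
  constructor
  · -- Part 1: differentiability away from z₀
    intro z hz
    obtain ⟨⟨hz1, hz2⟩, hzz₀⟩ := hz
    have hzz₀' : z ≠ z₀ := by simpa using hzz₀
    have hz0 : z ≠ 0 := by
      intro h
      rw [h, norm_zero] at hz1
      linarith
    have hcA := hmem1 z hz1 hz2
    have hcne1 := hmem1ne z hz1 hz2
    have hdA := hmem2 z hz1 hz2
    have hdne1 : z₀ / z ≠ 1 := by
      intro h
      exact hzz₀' ((div_eq_one_iff_eq hz0).mp h).symm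
    have hinner1 : DifferentiableAt ℂ (fun z : ℂ => (starRingEnd ℂ) z₀ * z) z :=
      (differentiableAt_id.const_mul _)
    have hinner2 : DifferentiableAt ℂ (fun z : ℂ => z₀ / z) z :=
      (differentiableAt_const z₀).div differentiableAt_id hz0
    have t1 : DifferentiableAt ℂ
        (fun z => z * deriv (theta1 r) ((starRingEnd ℂ) z₀ * z) /
          theta1 r ((starRingEnd ℂ) z₀ * z)) z := by
      apply DifferentiableAt.div
      · exact differentiableAt_id.mul
          (((hDθdiff _ hcA).differentiableAt (hA.mem_nhds hcA)).comp z hinner1)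
      · exact ((hθdiff _ hcA).differentiableAt (hA.mem_nhds hcA)).comp z hinner1
      · exact hθne _ hcA hcne1
    have t2 : DifferentiableAt ℂ
        (fun z => deriv (theta1 r) (z₀ / z) / (z * theta1 r (z₀ / z))) z := by
      apply DifferentiableAt.div
      · exact ((hDθdiff _ hdA).differentiableAt (hA.mem_nhds hdA)).comp z hinner2
      · exact differentiableAt_id.mul
          (((hθdiff _ hdA).differentiableAt (hA.mem_nhds hdA)).comp z hinner2)
      · exact mul_ne_zero hz0 (hθne _ hdA hdne1)
    exact ((t1.sub t2).differentiableWithinAt : DifferentiableWithinAt ℂ (pfun r z₀) _ z)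
  · -- Part 2: the residue
    have hz₀mem : z₀ ∈ {z : ℂ | r < ‖z‖ ∧ ‖z‖ < 1} := ⟨hz₀l, hz₀u⟩
    obtain ⟨ε, hε, hball⟩ := Metric.isOpen_iff.mp (aux_isOpen r 1) z₀ hz₀mem
    refine ⟨ε, hε, fun z => z * deriv (theta1 r) ((starRingEnd ℂ) z₀ * z) /
        theta1 r ((starRingEnd ℂ) z₀ * z)
      - deriv (Hfun r) (z₀ / z) / (z * Hfun r (z₀ / z)), ?_, ?_⟩
    · -- g differentiable on the ball
      intro z hz
      have hzann := hball hz
      obtain ⟨hz1, hz2⟩ := hzann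
      have hz0 : z ≠ 0 := by
        intro h
        rw [h, norm_zero] at hz1
        linarith
      have hcA := hmem1 z hz1 hz2
      have hcne1 := hmem1ne z hz1 hz2
      have hdA := hmem2 z hz1 hz2
      have hinner1 : DifferentiableAt ℂ (fun z : ℂ => (starRingEnd ℂ) z₀ * z) z :=
        (differentiableAt_id.const_mul _)
      have hinner2 : DifferentiableAt ℂ (fun z : ℂ => z₀ / z) z :=
        (differentiableAt_const z₀).div differentiableAt_id hz0
      have t1 : DifferentiableAt ℂ
          (fun z => z * deriv (theta1 r) ((starRingEnd ℂ) z₀ * z) /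
            theta1 r ((starRingEnd ℂ) z₀ * z)) z := by
        apply DifferentiableAt.div
        · exact differentiableAt_id.mul
            (((hDθdiff _ hcA).differentiableAt (hA.mem_nhds hcA)).comp z hinner1)
        · exact ((hθdiff _ hcA).differentiableAt (hA.mem_nhds hcA)).comp z hinner1
        · exact hθne _ hcA hcne1
      have t2 : DifferentiableAt ℂ
          (fun z => deriv (Hfun r) (z₀ / z) / (z * Hfun r (z₀ / z))) z := by
        apply DifferentiableAt.div
        · exact ((hDHdiff _ hdA).differentiableAt (hA.mem_nhds hdA)).comp z hinner2
        · exact differentiableAt_id.mul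
            (((hHdiff _ hdA).differentiableAt (hA.mem_nhds hdA)).comp z hinner2)
        · exact mul_ne_zero hz0 (hHne _ hdA)
      exact (t1.sub t2).differentiableWithinAt
    · -- the identity on the punctured ball
      intro z hz
      obtain ⟨hzb, hzne⟩ := hz
      have hzz₀ : z ≠ z₀ := by simpa using hzne
      obtain ⟨hz1, hz2⟩ := hball hzb
      have hz0 : z ≠ 0 := by
        intro h
        rw [h, norm_zero] at hz1
        linarith
      have hdA := hmem2 z hz1 hz2
      set w : ℂ := z₀ / z with hwdef
      have hw1 : w ≠ 1 := by
        intro h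
        rw [hwdef, div_eq_one_iff_eq hz0] at h
        exact hzz₀ h.symm
      have hw1' : w - 1 ≠ 0 := sub_ne_zero.2 hw1
      have hHw : Hfun r w ≠ 0 := hHne w hdA
      have hzz₀' : z - z₀ ≠ 0 := sub_ne_zero.2 hzz₀
      have hwz : z * (w - 1) = z₀ - z := by
        rw [hwdef]
        field_simp
      have hθw : theta1 r w = (w - 1) * Hfun r w := theta1_eq_Hfun r (hAne w hdA)
      have hdw : deriv (theta1 r) w = Hfun r w + (w - 1) * deriv (Hfun r) w := hθderiv w hdA
      have h1 : z - z₀ = -(z * (w - 1)) := by rw [hwz]; ring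
      have key : (Hfun r w + (w - 1) * deriv (Hfun r) w) / (z * ((w - 1) * Hfun r w)) =
          -(z - z₀)⁻¹ + deriv (Hfun r) w / (z * Hfun r w) := by
        rw [h1]
        field_simp
      simp only [pfun]
      rw [hdw, hθw, key]
      ring
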